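/- arXiv:1909.10962 — 3 statements merged into one kernel-verified Lean document; each statement's English description precedes it below -/
import Mathlib

section
/- Let G be a group, y ∈ G, and k > 1 an integer. Suppose v, w ∈ G commute (v * w = w * v), the centralizer of y equals the subgroup generated by {v, w}, and the map ℤ × ℤ → G sending (r, s) to v^r * w^s is injective. Suppose y = v^c * w^d for integers c, d, and assume that any two k-th roots of y in G are conjugate in G. Then: (1) there exists a ∈ G with a^k = y if and only if k divides c and k divides d; and (2) if k divides c and k divides d, then a = v^(c/k) * w^(d/k) is the unique element of G satisfying a^k = y. -/
/-- If the centralizer of `y` is free abelian of rank 2 with basis `v, w`,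
`y = v^c * w^d`, and any two `k`-th roots of `y` are conjugate, then `y` has a
`k`-th root iff `k ∣ c` and `k ∣ d`, in which case `v^(c/k) * w^(d/k)` is the
unique `k`-th root of `y`. -/
theorem kth_root_iff_divides {G : Type*} [Group G] (y v w : G) (k : ℤ) (hk : 1 < k)
    (hvw : v * w = w * v)
    (hcent : Subgroup.centralizer ({y} : Set G) = Subgroup.closure {v, w})
    (hinj : Function.Injective (fun p : ℤ × ℤ => v ^ p.1 * w ^ p.2))
    (c d : ℤ) (hy : y = v ^ c * w ^ d)
    (hconj : ∀ a b : G, a ^ k = y → b ^ k = y → ∃ u : G, b = u⁻¹ * a * u) :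
    ((∃ a : G, a ^ k = y) ↔ (k ∣ c ∧ k ∣ d)) ∧
    (k ∣ c → k ∣ d →
      (v ^ (c / k) * w ^ (d / k)) ^ k = y ∧
      ∀ a : G, a ^ k = y → a = v ^ (c / k) * w ^ (d / k)) := by
  have hc : Commute v w := hvw
  have hk0 : k ≠ 0 := by omega
  -- the subgroup of elements of the form v^r * w^s
  let S : Subgroup G :=
    { carrier := {x | ∃ r s : ℤ, x = v ^ r * w ^ s}
      one_mem' := ⟨0, 0, by simp⟩
      mul_mem' := by
        rintro x y ⟨r, s, rfl⟩ ⟨r', s', rfl⟩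
        refine ⟨r + r', s + s', ?_⟩
        rw [zpow_add, zpow_add, mul_assoc, mul_assoc, ← mul_assoc (w ^ s),
          (hc.zpow_zpow r' s).symm.eq, mul_assoc]
      inv_mem' := by
        rintro x ⟨r, s, rfl⟩
        refine ⟨-r, -s, ?_⟩
        rw [mul_inv_rev, ((hc.zpow_zpow r s).inv_inv).symm.eq, ← zpow_neg, ← zpow_neg] }
  have key : ∀ a : G, a ^ k = y → ∃ r s : ℤ, a = v ^ r * w ^ s ∧ k * r = c ∧ k * s = d := by
    intro a ha
    have hay : a ∈ Subgroup.centralizer ({y} : Set G) := by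
      rw [Subgroup.mem_centralizer_iff]
      rintro g hg
      rcases hg with rfl
      rw [← ha, ← zpow_add_one, ← zpow_one_add, add_comm]
    rw [hcent] at hay
    have hle : Subgroup.closure ({v, w} : Set G) ≤ S := by
      rw [Subgroup.closure_le]
      rintro x (rfl | rfl)
      · exact ⟨1, 0, by simp⟩
      · exact ⟨0, 1, by simp⟩
    obtain ⟨r, s, rfl⟩ := hle hay
    have hpow : (v ^ r * w ^ s) ^ k = v ^ (r * k) * w ^ (s * k) := by
      rw [(hc.zpow_zpow r s).mul_zpow, ← zpow_mul, ← zpow_mul]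
    have : v ^ (r * k) * w ^ (s * k) = v ^ c * w ^ d := by rw [← hpow, ha, hy]
    have h2 := hinj (a₁ := (r * k, s * k)) (a₂ := (c, d)) this
    rw [Prod.mk.injEq] at h2
    exact ⟨r, s, rfl, by rw [mul_comm]; exact h2.1, by rw [mul_comm]; exact h2.2⟩
  have root : k ∣ c → k ∣ d → (v ^ (c / k) * w ^ (d / k)) ^ k = y := by
    intro hdc hdd
    rw [(hc.zpow_zpow _ _).mul_zpow, ← zpow_mul, ← zpow_mul,
      Int.ediv_mul_cancel hdc, Int.ediv_mul_cancel hdd, hy]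
  refine ⟨⟨?_, fun ⟨h1, h2⟩ => ⟨_, root h1 h2⟩⟩, fun h1 h2 => ⟨root h1 h2, ?_⟩⟩
  · rintro ⟨a, ha⟩
    obtain ⟨r, s, -, hr, hs⟩ := key a ha
    exact ⟨⟨r, hr.symm⟩, ⟨s, hs.symm⟩⟩
  · intro a ha
    obtain ⟨r, s, rfl, hr, hs⟩ := key a ha
    rw [← hr, ← hs, Int.mul_ediv_cancel_left _ hk0, Int.mul_ediv_cancel_left _ hk0]
end

section
/- Let X be a type, f : X → X and τ : X → X functions such that τ ∘ τ = id and f ∘ τ = τ ∘ f. Let y ∈ X be a periodic point of f (f^[t](y) = y for some t > 0). Suppose τ(y) ≠ y and let m > 0 be minimal such that f^[m](y) = τ(y). Then the minimal period of y under f equals 2 * m. -/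
/-- If `τ` is an involution commuting with `f`, `y` is a periodic point of `f`
with `τ y ≠ y`, and `m > 0` is minimal with `f^[m] y = τ y`, then the minimal
period of `y` under `f` is `2 * m`. -/
theorem minimalPeriod_eq_two_mul {X : Type*} (f τ : X → X)
    (hτ : τ ∘ τ = id) (hcomm : f ∘ τ = τ ∘ f)
    (y : X) (t : ℕ) (ht : 0 < t) (hper : f^[t] y = y)
    (hτy : τ y ≠ y)
    (m : ℕ) (hm : 0 < m) (hmy : f^[m] y = τ y)
    (hmin : ∀ j : ℕ, 0 < j → f^[j] y = τ y → m ≤ j) :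
    Function.minimalPeriod f y = 2 * m := by
  have hc : Function.Commute f τ := fun x => congrFun hcomm x
  have hcm : Function.Commute f^[m] τ := (hc.iterate_left m)
  -- 2*m is a period
  have h2m : f^[2 * m] y = y := by
    rw [two_mul, Function.iterate_add_apply, hmy, hcm y, hmy]
    exact congrFun hτ y
  have hmem : y ∈ Function.periodicPts f := ⟨t, ht, hper⟩
  set n := Function.minimalPeriod f y with hn
  have hnpos : 0 < n := Function.minimalPeriod_pos_of_mem_periodicPts hmem
  have hdvd : n ∣ 2 * m := Function.IsPeriodicPt.minimalPeriod_dvd h2m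
  -- f^[m % n] y = τ y
  have hr : f^[m % n] y = τ y := by
    rw [Function.iterate_mod_minimalPeriod_eq, hmy]
  have hrpos : 0 < m % n := by
    rcases Nat.eq_zero_or_pos (m % n) with h0 | h
    · exfalso
      rw [h0] at hr
      exact hτy hr.symm
    · exact h
  have hmn : m < n := by
    have h1 : m ≤ m % n := hmin _ hrpos hr
    have h2 : m % n ≤ m := Nat.mod_le m n
    have : m % n = m := le_antisymm h2 h1
    have := Nat.mod_lt m hnpos
    omega
  -- n divides 2m and n > m, so n = 2m
  obtain ⟨k, hk⟩ := hdvd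
  have hk1 : k = 1 := by
    rcases Nat.lt_or_ge k 2 with h | h
    · interval_cases k <;> omega
    · exfalso
      have h2 : n * 2 ≤ n * k := Nat.mul_le_mul_left n h
      omega
  rw [hk1, mul_one] at hk
  omega
end

section
/- Let G be a group and Δ, q ∈ G elements such that Δ² commutes with q (Δ² * q = q * Δ²). Then for every integer c and every natural number r, Δ^(2c − 1) * (q * Δ⁻¹ * q * Δ)^r * q = (Δ²)^(c + r) * (Δ⁻¹ * q)^(2r + 1). -/
/-- If `Δ²` commutes with `q`, then
`Δ^(2c - 1) * (q * Δ⁻¹ * q * Δ)^r * q = (Δ²)^(c + r) * (Δ⁻¹ * q)^(2r + 1)`. -/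
theorem odd_infimum_identity {G : Type*} [Group G] (Δ q : G)
    (h : Δ ^ 2 * q = q * Δ ^ 2) (c : ℤ) (r : ℕ) :
    Δ ^ (2 * c - 1) * (q * Δ⁻¹ * q * Δ) ^ r * q =
      (Δ ^ 2) ^ (c + (r : ℤ)) * (Δ⁻¹ * q) ^ (2 * r + 1) := by
  have hzq : Commute (Δ ^ 2) q := h
  have hza : Commute (Δ ^ 2) (Δ⁻¹ * q) :=
    (((Commute.refl Δ).pow_left 2).inv_right).mul_right hzq
  have hΔq : Δ * q = Δ⁻¹ * q * Δ ^ 2 := by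
    rw [mul_assoc, ← h]; group
  have step : Δ⁻¹ * q * (Δ * q) = Δ ^ 2 * (Δ⁻¹ * q) ^ 2 := by
    rw [hΔq, ← mul_assoc, show Δ⁻¹ * q * (Δ⁻¹ * q) = (Δ⁻¹ * q) ^ 2 from (sq _).symm,
      ← (hza.pow_right 2).eq]
  induction r with
  | zero =>
    simp only [Nat.cast_zero, add_zero, pow_zero, mul_one, Nat.mul_zero, zero_add, pow_one]
    rw [← mul_assoc]
    congr 1
    rw [← zpow_natCast Δ 2, ← zpow_mul, ← zpow_neg_one, ← zpow_add]
    congr 1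
  | succ n ih =>
    have e1 : Δ ^ (2 * c - 1) * (q * Δ⁻¹ * q * Δ) ^ (n + 1) * q
        = (Δ ^ (2 * c - 1) * (q * Δ⁻¹ * q * Δ) ^ n * q) * (Δ⁻¹ * q * (Δ * q)) := by
      rw [pow_succ]; group
    rw [e1, ih, step, mul_assoc, ← mul_assoc ((Δ⁻¹ * q) ^ (2 * n + 1)),
      ← (hza.pow_right (2 * n + 1)).eq, ← mul_assoc, ← mul_assoc,
      ← zpow_add_one]
    rw [mul_assoc, ← pow_add]
    congr 1
    congr 1; push_cast; ring
end
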